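/- arXiv:2501.05827 — 3 statements merged into one kernel-verified Lean document; each statement's English description precedes it below -/
import Mathlib

section
/- Let I_a ⊆ Q_n be the initial segment of length a and let S ⊆ Q_n with |S| = a. Then m(I_a) = m(S) (the m-vectors agree in every coordinate) if and only if S = I_a. -/
/-- The hypercube graph on `{0,1}^n`: two strings adjacent iff they differ in one coordinate. -/
def hypercube (n : ℕ) : SimpleGraph (Fin n → Bool) where
  Adj x y := (Finset.univ.filter (fun i => x i ≠ y i)).card = 1
  symm := by constructor; intro x y h; simpa [ne_comm] using h
  loopless := by constructor; intro x h; simp at h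

/-- The integer represented by a string, position 0 most significant. -/
def bval {n : ℕ} (x : Fin n → Bool) : ℕ :=
  ∑ i : Fin n, if x i then 2 ^ (n - 1 - i.val) else 0

/-- The initial segment of length `a` in the binary order on `{0,1}^n`. -/
def initSeg (n a : ℕ) : Finset (Fin n → Bool) :=
  Finset.univ.filter (fun x => bval x < a)

/-- `m_j(S)`: number of elements of `S` with a `1` in coordinate `j`. -/
def mCount {n : ℕ} (S : Finset (Fin n → Bool)) (j : Fin n) : ℕ :=
  (S.filter (fun x => x j = true)).card

/-- The hyperface `F_{j,k}` of strings whose `j`-th coordinate equals `k`. -/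
def face (n : ℕ) (j : Fin n) (k : Bool) : Finset (Fin n → Bool) :=
  Finset.univ.filter (fun x => x j = k)

def lowval {n : ℕ} (g : Fin n → Bool) : ℕ :=
  ∑ i : Fin n, if g i then 2 ^ (i : ℕ) else 0

lemma lowval_succ {n : ℕ} (g : Fin (n+1) → Bool) :
    lowval g = (if g 0 then 1 else 0) + 2 * lowval (fun i => g i.succ) := by
  unfold lowval
  rw [Fin.sum_univ_succ, Finset.mul_sum]
  congr 1
  apply Finset.sum_congr rfl
  intro i _
  cases h : g i.succ <;> simp [h, Fin.val_succ, pow_succ, mul_comm]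

lemma lowval_inj {n : ℕ} : Function.Injective (lowval (n := n)) := by
  induction n with
  | zero => intro x y _; funext i; exact i.elim0
  | succ n ih =>
    intro x y h
    rw [lowval_succ x, lowval_succ y] at h
    have h0 : x 0 = y 0 := by
      cases hx : x 0 <;> cases hy : y 0 <;> simp [hx, hy] at h ⊢ <;> omega
    rw [h0] at h
    have ht : (fun i : Fin n => x i.succ) = fun i : Fin n => y i.succ := by
      apply ih; omega
    funext i
    refine Fin.cases ?_ ?_ i
    · exact h0
    · intro j; exact congrFun ht j

lemma bval_eq_lowval {n : ℕ} (x : Fin n → Bool) :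
    bval x = lowval (fun i => x (Fin.rev i)) := by
  unfold bval lowval
  refine Fintype.sum_equiv (Fin.revPerm) _ _ ?_
  intro i
  have h : ((Fin.rev i : Fin n) : ℕ) = n - 1 - (i : ℕ) := by
    rw [Fin.val_rev]; omega
  simp only [Fin.revPerm_apply, Fin.rev_rev, Fin.val_rev]
  rw [show n - (↑i + 1) = n - 1 - ↑i by omega]

lemma bval_inj {n : ℕ} : Function.Injective (bval (n := n)) := by
  intro x y h
  rw [bval_eq_lowval, bval_eq_lowval] at h
  have := lowval_inj h
  funext i
  have := congrFun this (Fin.rev i)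
  simpa [Fin.rev_rev] using this

lemma sum_two_pow (n : ℕ) : ∑ i ∈ Finset.range n, 2 ^ i = 2 ^ n - 1 := by
  induction n with
  | zero => simp
  | succ n ih =>
    rw [Finset.sum_range_succ, ih]
    have : 1 ≤ 2 ^ n := Nat.one_le_two_pow
    rw [pow_succ]; omega

lemma bval_lt {n : ℕ} (x : Fin n → Bool) : bval x < 2 ^ n := by
  rw [bval_eq_lowval]
  have h1 : lowval (fun i => x (Fin.rev i)) ≤ ∑ i : Fin n, 2 ^ (i : ℕ) := by
    apply Finset.sum_le_sum
    intro i _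
    split <;> simp
  have h2 : ∑ i : Fin n, 2 ^ (i : ℕ) = 2 ^ n - 1 := by
    rw [Fin.sum_univ_eq_sum_range, sum_two_pow]
  have : 1 ≤ 2 ^ n := Nat.one_le_two_pow
  omega

lemma image_univ_bval (n : ℕ) :
    (Finset.univ.image (bval (n := n))) = Finset.range (2 ^ n) := by
  apply Finset.eq_of_subset_of_card_le
  · intro b hb
    simp only [Finset.mem_image] at hb
    obtain ⟨x, _, rfl⟩ := hb
    exact Finset.mem_range.mpr (bval_lt x)
  · rw [Finset.card_range, Finset.card_image_of_injective _ bval_inj]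
    simp

lemma image_initSeg_bval (n a : ℕ) (ha : a ≤ 2 ^ n) :
    (initSeg n a).image bval = Finset.range a := by
  ext b
  simp only [Finset.mem_image, Finset.mem_range, initSeg, Finset.mem_filter,
    Finset.mem_univ, true_and]
  constructor
  · rintro ⟨x, hx, rfl⟩; exact hx
  · intro hb
    have : b ∈ Finset.range (2 ^ n) := Finset.mem_range.mpr (lt_of_lt_of_le hb ha)
    rw [← image_univ_bval n] at this
    simp only [Finset.mem_image, Finset.mem_univ, true_and] at this
    obtain ⟨x, rfl⟩ := this
    exact ⟨x, hb, rfl⟩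

lemma card_initSeg (n a : ℕ) (ha : a ≤ 2 ^ n) : (initSeg n a).card = a := by
  rw [← Finset.card_image_of_injective _ bval_inj, image_initSeg_bval n a ha,
    Finset.card_range]

lemma weighted_sum {n : ℕ} (S : Finset (Fin n → Bool)) :
    ∑ j : Fin n, 2 ^ (n - 1 - (j : ℕ)) * mCount S j = ∑ x ∈ S, bval x := by
  unfold mCount bval
  simp only [Finset.card_filter, Finset.mul_sum]
  rw [Finset.sum_comm]
  apply Finset.sum_congr rfl
  intro x _
  apply Finset.sum_congr rfl
  intro j _
  split <;> simp

lemma range_min (T : Finset ℕ) (a : ℕ) (hc : T.card = a)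
    (hs : ∑ t ∈ T, t = ∑ t ∈ Finset.range a, t) : T = Finset.range a := by
  by_contra hne
  set R := Finset.range a with hR
  have hcardR : R.card = a := Finset.card_range a
  have hAB : (T \ R).card = (R \ T).card := by
    have h1 := Finset.card_inter_add_card_sdiff T R
    have h2 := Finset.card_inter_add_card_sdiff R T
    rw [Finset.inter_comm] at h2
    omega
  have hsum : ∑ t ∈ T \ R, t = ∑ t ∈ R \ T, t := by
    have h1 : ∑ t ∈ T ∩ R, t + ∑ t ∈ T \ R, t = ∑ t ∈ T, t :=
      Finset.sum_inter_add_sum_sdiff T R _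
    have h2 : ∑ t ∈ R ∩ T, t + ∑ t ∈ R \ T, t = ∑ t ∈ R, t :=
      Finset.sum_inter_add_sum_sdiff R T _
    rw [Finset.inter_comm] at h2
    omega
  have hA : (T \ R).Nonempty := by
    rw [Finset.nonempty_iff_ne_empty]
    intro h
    apply hne
    apply Finset.eq_of_subset_of_card_le (Finset.sdiff_eq_empty_iff_subset.mp h)
    omega
  have hB : (R \ T).Nonempty := Finset.card_pos.mp (hAB ▸ Finset.card_pos.mpr hA)
  have h1 : a * (T \ R).card ≤ ∑ t ∈ T \ R, t := by
    calc a * (T \ R).card = ∑ _t ∈ T \ R, a := by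
          rw [Finset.sum_const, smul_eq_mul, mul_comm]
      _ ≤ _ := by
          apply Finset.sum_le_sum
          intro t ht
          have := (Finset.mem_sdiff.mp ht).2
          simp [hR, Finset.mem_range] at this
          omega
  have h2 : ∑ t ∈ R \ T, t < a * (R \ T).card := by
    calc ∑ t ∈ R \ T, t < ∑ _t ∈ R \ T, a := by
          apply Finset.sum_lt_sum_of_nonempty hB
          intro t ht
          have := (Finset.mem_sdiff.mp ht).1
          simpa [hR, Finset.mem_range] using this
      _ = a * (R \ T).card := by rw [Finset.sum_const, smul_eq_mul, mul_comm]
  rw [hAB] at h1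
  omega

theorem stmt_4 (n a : ℕ) (ha : a ≤ 2 ^ n) (S : Finset (Fin n → Bool)) (hS : S.card = a) :
    (∀ j : Fin n, mCount (initSeg n a) j = mCount S j) ↔ S = initSeg n a := by
  constructor
  · intro hm
    have hsum : ∑ x ∈ S, bval x = ∑ x ∈ initSeg n a, bval x := by
      rw [← weighted_sum S, ← weighted_sum (initSeg n a)]
      exact (Finset.sum_congr rfl fun j _ => by rw [hm j]).symm
    have hsum2 : ∑ b ∈ S.image bval, b = ∑ b ∈ Finset.range a, b := by
      rw [Finset.sum_image (fun x _ y _ h => bval_inj h),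
        ← image_initSeg_bval n a ha,
        Finset.sum_image (fun x _ y _ h => bval_inj h)]
      exact hsum
    have hcard : (S.image bval).card = a := by
      rw [Finset.card_image_of_injective _ bval_inj, hS]
    have himg : S.image bval = (initSeg n a).image bval := by
      rw [range_min _ a hcard hsum2, image_initSeg_bval n a ha]
    exact Finset.image_injective bval_inj himg
  · intro h
    rw [h]
    intro j
    rfl
end

section
/- Let k ≤ n and a ≤ 2^k. Then for each position j with n−k ≤ j ≤ n−1, m_j(I_{2^k − a}) = (2^{k−1} − a) + m_j(I_a), and (2^k − a) − m_j(I_{2^k − a}) = (2^{k−1} − a) + (a − m_j(I_a)). -/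
namespace Aux

/-- reversal of indices -/
def rev {n : ℕ} (i : Fin n) : Fin n := ⟨n - 1 - i.val, by omega⟩

lemma rev_rev {n : ℕ} (i : Fin n) : rev (rev i) = i := by
  have := i.isLt; simp [rev, Fin.ext_iff]; omega

def revEquiv {n : ℕ} : Equiv.Perm (Fin n) := ⟨rev, rev, rev_rev, rev_rev⟩

lemma sum_range_two_pow (k : ℕ) : ∑ e ∈ Finset.range k, 2 ^ e = 2 ^ k - 1 := by
  induction k with
  | zero => simp
  | succ k ih => rw [Finset.sum_range_succ, ih]; have : 1 ≤ 2^k := Nat.one_le_two_pow; rw [pow_succ]; omega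

lemma bval_eq {n : ℕ} (x : Fin n → Bool) :
    bval x = ((finFunctionFinEquiv (fun i => if x (rev i) then (1 : Fin 2) else 0) : Fin (2^n)) : ℕ) := by
  rw [finFunctionFinEquiv_apply]
  rw [show (bval x) = ∑ i : Fin n, (fun i => if x i then 2 ^ (n - 1 - i.val) else 0) (revEquiv i) from
    (Equiv.sum_comp revEquiv _).symm]
  refine Finset.sum_congr rfl fun i _ => ?_
  have hi := i.isLt
  simp only [revEquiv, Equiv.coe_fn_mk]
  show (if x (rev i) = true then 2 ^ (n - 1 - (rev i).val) else 0) = _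
  by_cases h : x (rev i)
  · rw [if_pos h, if_pos h]
    simp only [Fin.val_one, one_mul]
    congr 1
    simp only [rev]
    omega
  · rw [if_neg h, if_neg h]
    simp

lemma bval_injective {n : ℕ} : Function.Injective (bval (n := n)) := by
  intro x y h
  rw [bval_eq x, bval_eq y] at h
  have h2 := finFunctionFinEquiv.injective (Fin.val_injective h)
  funext i
  have := congrFun h2 (rev i)
  rw [rev_rev] at this
  by_cases hx : x i <;> by_cases hy : y i <;> simp_all

lemma bval_lt {n : ℕ} (x : Fin n → Bool) : bval x < 2 ^ n := by
  rw [bval_eq]; exact Fin.isLt _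

lemma card_initSeg {n m : ℕ} (hm : m ≤ 2 ^ n) : (initSeg n m).card = m := by
  have himg : Finset.univ.image (bval (n := n)) = Finset.range (2 ^ n) := by
    apply Finset.eq_of_subset_of_card_le
    · intro t ht
      simp only [Finset.mem_image] at ht
      obtain ⟨x, _, rfl⟩ := ht
      exact Finset.mem_range.2 (bval_lt x)
    · rw [Finset.card_range, Finset.card_image_of_injective _ bval_injective]
      simp [Finset.card_univ]
  have : (initSeg n m).image bval = (Finset.range (2 ^ n)).filter (fun t => t < m) := by
    rw [initSeg, ← himg, Finset.filter_image]
  have hcard := congrArg Finset.card this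
  rw [Finset.card_image_of_injective _ bval_injective] at hcard
  rw [hcard]
  rw [show (Finset.range (2 ^ n)).filter (fun t => t < m) = Finset.range m by
    ext t; simp; omega]
  exact Finset.card_range m

/-- the key sum -/
lemma sum_high {n k : ℕ} (hk : k ≤ n) :
    (∑ i : Fin n, if n - k ≤ i.val then 2 ^ (n - 1 - i.val) else 0) = 2 ^ k - 1 := by
  rw [show (∑ i : Fin n, if n - k ≤ i.val then 2 ^ (n - 1 - i.val) else 0)
      = ∑ i : Fin n, (fun i : Fin n => if n - k ≤ i.val then 2 ^ (n - 1 - i.val) else 0) (revEquiv i) from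
    (Equiv.sum_comp revEquiv _).symm]
  have : ∀ i : Fin n, (fun i : Fin n => if n - k ≤ i.val then 2 ^ (n - 1 - i.val) else 0) (revEquiv i)
      = if i.val < k then 2 ^ i.val else 0 := by
    intro i
    have := i.isLt
    simp only [revEquiv, rev, Equiv.coe_fn_mk]
    show (if n - k ≤ n - 1 - i.val then 2 ^ (n - 1 - (n - 1 - i.val)) else 0) = _
    by_cases h : i.val < k
    · rw [if_pos (by omega), if_pos h]; congr 1; omega
    · rw [if_neg (by omega), if_neg h]
  rw [Finset.sum_congr rfl (fun i _ => this i)]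
  rw [Fin.sum_univ_eq_sum_range (fun e => if e < k then 2 ^ e else 0)]
  rw [Finset.sum_ite, Finset.sum_const_zero, add_zero]
  rw [show (Finset.range n).filter (fun e => e < k) = Finset.range k by ext t; simp; omega]
  exact sum_range_two_pow k

/-- low characterization -/
lemma lt_two_pow_iff {n k : ℕ} (hk : k ≤ n) (x : Fin n → Bool) :
    bval x < 2 ^ k ↔ ∀ i : Fin n, i.val < n - k → x i = false := by
  constructor
  · intro h i hi
    by_contra hx
    have hx' : x i = true := by simp_all
    have h1 : 2 ^ (n - 1 - i.val) ≤ bval x := by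
      refine Finset.single_le_sum (f := fun i => if x i then 2 ^ (n - 1 - i.val) else 0)
        (fun _ _ => Nat.zero_le _) (Finset.mem_univ i) |>.trans_eq' ?_
      rw [if_pos hx']
    have h2 : 2 ^ k ≤ 2 ^ (n - 1 - i.val) := Nat.pow_le_pow_right (by norm_num) (by omega)
    omega
  · intro h
    have : bval x ≤ ∑ i : Fin n, if n - k ≤ i.val then 2 ^ (n - 1 - i.val) else 0 := by
      refine Finset.sum_le_sum fun i _ => ?_
      by_cases hi : n - k ≤ i.val
      · rw [if_pos hi]; split <;> simp
      · rw [if_neg hi, h i (by omega)]; simp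
    rw [sum_high hk] at this
    have : (1:ℕ) ≤ 2 ^ k := Nat.one_le_two_pow
    omega

def comp (n k : ℕ) (x : Fin n → Bool) : Fin n → Bool :=
  fun i => if n - k ≤ i.val then !(x i) else x i

lemma comp_comp {n k : ℕ} (x : Fin n → Bool) : comp n k (comp n k x) = x := by
  funext i; by_cases h : n - k ≤ i.val <;> simp [comp, h]

lemma bval_add_comp {n k : ℕ} (hk : k ≤ n) (x : Fin n → Bool)
    (hx : bval x < 2 ^ k) : bval x + bval (comp n k x) = 2 ^ k - 1 := by
  rw [lt_two_pow_iff hk] at hx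
  rw [bval, bval, ← Finset.sum_add_distrib, ← sum_high hk]
  refine Finset.sum_congr rfl fun i _ => ?_
  by_cases h : n - k ≤ i.val
  · rw [if_pos h]
    cases hxi : x i <;> simp [comp, h, hxi]
  · rw [if_neg h, hx i (by omega)]
    simp [comp, h, hx i (by omega)]

lemma comp_lt {n k : ℕ} (hk : k ≤ n) (x : Fin n → Bool) (hx : bval x < 2 ^ k) :
    bval (comp n k x) < 2 ^ k := by
  have := bval_add_comp hk x hx
  have : (1:ℕ) ≤ 2 ^ k := Nat.one_le_two_pow
  omega

lemma filter_bool_card {n : ℕ} (S : Finset (Fin n → Bool)) (j : Fin n) :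
    (S.filter (fun x => x j = true)).card + (S.filter (fun x => x j = false)).card = S.card := by
  rw [← Finset.card_union_of_disjoint, ← Finset.filter_or, Finset.filter_true_of_mem]
  · intro x _; cases x j <;> simp
  · rw [Finset.disjoint_left]; intro x h1 h2
    simp only [Finset.mem_filter] at h1 h2
    simp [h1.2] at h2

lemma comp_mem_j {n k : ℕ} (j : Fin n) (hj : n - k ≤ j.val) (x : Fin n → Bool) :
    comp n k x j = !(x j) := by simp [comp, hj]

lemma initSeg_subset {n : ℕ} {a b : ℕ} (h : a ≤ b) : initSeg n a ⊆ initSeg n b := by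
  intro x hx
  simp only [initSeg, Finset.mem_filter, Finset.mem_univ, true_and] at hx ⊢
  omega

lemma mcount_full {n k : ℕ} (hk : k ≤ n) (j : Fin n) (hj : n - k ≤ j.val) (hj' : j.val < n) :
    mCount (initSeg n (2 ^ k)) j = 2 ^ (k - 1) := by
  have hk1 : 1 ≤ k := by omega
  have hpk : (2:ℕ) ^ k = 2 * 2 ^ (k - 1) := by
    conv_lhs => rw [show k = (k - 1) + 1 from by omega]
    rw [pow_succ, Nat.mul_comm]
  have hAB : ((initSeg n (2 ^ k)).filter (fun x => x j = true)).card
      = ((initSeg n (2 ^ k)).filter (fun x => x j = false)).card := by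
    refine Finset.card_bij' (fun x _ => comp n k x) (fun x _ => comp n k x) ?_ ?_ ?_ ?_
    · intro x hx
      simp only [initSeg, Finset.mem_filter, Finset.mem_univ, true_and] at hx ⊢
      exact ⟨comp_lt hk x hx.1, by rw [comp_mem_j j hj, hx.2]; rfl⟩
    · intro x hx
      simp only [initSeg, Finset.mem_filter, Finset.mem_univ, true_and] at hx ⊢
      exact ⟨comp_lt hk x hx.1, by rw [comp_mem_j j hj, hx.2]; rfl⟩
    · intro x _; exact comp_comp x
    · intro x _; exact comp_comp x
  have hsplit := filter_bool_card (initSeg n (2 ^ k)) j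
  have hcard : (initSeg n (2 ^ k)).card = 2 ^ k :=
    card_initSeg (Nat.pow_le_pow_right (by norm_num) hk)
  have h2 : 2 * ((initSeg n (2 ^ k)).filter (fun x => x j = true)).card = 2 * 2 ^ (k - 1) := by
    calc 2 * ((initSeg n (2 ^ k)).filter (fun x => x j = true)).card
        = ((initSeg n (2 ^ k)).filter (fun x => x j = true)).card
          + ((initSeg n (2 ^ k)).filter (fun x => x j = false)).card := by rw [two_mul, hAB]
      _ = (initSeg n (2 ^ k)).card := hsplit
      _ = 2 * 2 ^ (k - 1) := by rw [hcard, hpk]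
  exact Nat.eq_of_mul_eq_mul_left (by norm_num) h2

lemma card_D_eq {n k a : ℕ} (hk : k ≤ n) (ha : a ≤ 2 ^ k) (j : Fin n) (hj : n - k ≤ j.val) :
    ((initSeg n (2 ^ k) \ initSeg n (2 ^ k - a)).filter (fun x => x j = true)).card
      = ((initSeg n a).filter (fun x => x j = false)).card := by
  refine Finset.card_bij' (fun x _ => comp n k x) (fun x _ => comp n k x) ?_ ?_ ?_ ?_
  · intro x hx
    simp only [initSeg, Finset.mem_filter, Finset.mem_sdiff, Finset.mem_univ, true_and] at hx ⊢
    obtain ⟨⟨h1, h2⟩, h3⟩ := hx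
    have hsum := bval_add_comp hk x h1
    refine ⟨by omega, by rw [comp_mem_j j hj, h3]; rfl⟩
  · intro x hx
    simp only [initSeg, Finset.mem_filter, Finset.mem_sdiff, Finset.mem_univ, true_and] at hx ⊢
    obtain ⟨h1, h2⟩ := hx
    have h1' : bval x < 2 ^ k := by omega
    have hsum := bval_add_comp hk x h1'
    refine ⟨⟨comp_lt hk x h1', by omega⟩, by rw [comp_mem_j j hj, h2]; rfl⟩
  · intro x _; exact comp_comp x
  · intro x _; exact comp_comp x

end Aux

theorem stmt_11 (n k a : ℕ) (hk : k ≤ n) (ha : a ≤ 2 ^ k) (j : Fin n)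
    (hj : n - k ≤ j.val) :
    (mCount (initSeg n (2 ^ k - a)) j : ℤ) =
      ((2 : ℤ) ^ (k - 1) - a) + mCount (initSeg n a) j ∧
    ((2 ^ k - a : ℕ) : ℤ) - mCount (initSeg n (2 ^ k - a)) j =
      ((2 : ℤ) ^ (k - 1) - a) + ((a : ℤ) - mCount (initSeg n a) j) := by
  have hjlt := j.isLt
  have hk1 : 1 ≤ k := by omega
  have hpow : (2:ℕ) ^ k ≤ 2 ^ n := Nat.pow_le_pow_right (by norm_num) hk
  have hsubz : ((2 ^ k - a : ℕ) : ℤ) = (2:ℤ) ^ k - a := by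
    push_cast [ha]; ring
  have hpz : (2:ℤ) ^ k = 2 * 2 ^ (k - 1) := by
    conv_lhs => rw [show k = (k - 1) + 1 from by omega]
    rw [pow_succ, mul_comm]
  have hsub : initSeg n (2 ^ k - a) ⊆ initSeg n (2 ^ k) := Aux.initSeg_subset (by omega)
  have hsplit : mCount (initSeg n (2 ^ k)) j
      = mCount (initSeg n (2 ^ k - a)) j
        + ((initSeg n (2 ^ k) \ initSeg n (2 ^ k - a)).filter (fun x => x j = true)).card := by
    rw [mCount, mCount, ← Finset.card_union_of_disjoint
        (Finset.disjoint_filter_filter (Finset.disjoint_sdiff)),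
      ← Finset.filter_union, Finset.union_sdiff_of_subset hsub]
  have hD := Aux.card_D_eq hk ha j hj
  have hfull := Aux.mcount_full hk j hj hjlt
  have hsplit2 := Aux.filter_bool_card (initSeg n a) j
  have hcarda : (initSeg n a).card = a := Aux.card_initSeg (le_trans ha hpow)
  have e1 : 2 ^ (k - 1) = mCount (initSeg n (2 ^ k - a)) j
      + ((initSeg n a).filter (fun x => x j = false)).card := by
    rw [← hfull, hsplit, hD]
  have e2 : mCount (initSeg n a) j + ((initSeg n a).filter (fun x => x j = false)).card = a :=
    hsplit2.trans hcarda
  have key : 2 ^ (k - 1) + mCount (initSeg n a) j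
      = mCount (initSeg n (2 ^ k - a)) j + a := by
    calc 2 ^ (k - 1) + mCount (initSeg n a) j
        = mCount (initSeg n (2 ^ k - a)) j
          + ((initSeg n a).filter (fun x => x j = false)).card + mCount (initSeg n a) j := by
          rw [e1]
      _ = mCount (initSeg n (2 ^ k - a)) j
          + (mCount (initSeg n a) j + ((initSeg n a).filter (fun x => x j = false)).card) := by
          ring
      _ = mCount (initSeg n (2 ^ k - a)) j + a := by rw [e2]
  have keyz : (2:ℤ) ^ (k - 1) + (mCount (initSeg n a) j : ℤ)
      = (mCount (initSeg n (2 ^ k - a)) j : ℤ) + a := by exact_mod_cast key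
  refine ⟨by linarith, ?_⟩
  rw [hsubz, hpz]
  linarith
end

section
/- Let S ⊆ Q_n and g ∈ Aut(Q_n). If m_j(g(S)) = 0 for all j < k (i.e., the first k entries of the m-vector of g(S) are zero), then g(S) ⊆ F where F = {x : x_0 = ... = x_{k−1} = 0}, and there exists g' ∈ Aut(Q_n) fixing the first k coordinates pointwise (acting as an automorphism of Q_{n−k} on the remaining coordinates) with g'(S') = g(S) whenever S ⊆ F; in particular, if I_a ⊆ Q_n has a ≤ 2^{n−k} and the first k entries of m(g(I_a)) are zero, there is g' ∈ Aut(Q_n) with g'(I_a) = g(I_a) and g' restricting to an automorphism of the subcube F ≅ Q_{n−k}. -/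
namespace HCaux

variable {n : ℕ}

def flip (x : Fin n → Bool) (i : Fin n) : Fin n → Bool := Function.update x i (!(x i))

lemma flip_apply_self (x : Fin n → Bool) (i : Fin n) : flip x i i = !(x i) := by
  simp [flip]

lemma flip_apply_ne (x : Fin n → Bool) {i j : Fin n} (h : j ≠ i) : flip x i j = x j := by
  simp [flip, Function.update_of_ne h]

lemma flip_flip (x : Fin n → Bool) (i : Fin n) : flip (flip x i) i = x := by
  funext j
  by_cases h : j = i
  · subst h; simp [flip]
  · rw [flip_apply_ne _ h, flip_apply_ne _ h]

lemma adj_flip (x : Fin n → Bool) (i : Fin n) : (hypercube n).Adj x (flip x i) := by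
  show (Finset.univ.filter (fun j => x j ≠ flip x i j)).card = 1
  have : (Finset.univ.filter (fun j => x j ≠ flip x i j)) = {i} := by
    ext j
    simp only [Finset.mem_filter, Finset.mem_univ, true_and, Finset.mem_singleton]
    constructor
    · intro h
      by_contra hj
      exact h (flip_apply_ne x hj).symm
    · intro h; subst h; simp [flip_apply_self]
  rw [this]; rfl

lemma eq_flip_of_adj {x y : Fin n → Bool} (h : (hypercube n).Adj x y) :
    ∃ i, y = flip x i := by
  have h' : (Finset.univ.filter (fun i => x i ≠ y i)).card = 1 := h
  obtain ⟨i, hi⟩ := Finset.card_eq_one.mp h'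
  refine ⟨i, funext fun j => ?_⟩
  by_cases hj : j = i
  · subst hj
    have : j ∈ Finset.univ.filter (fun i => x i ≠ y i) := by rw [hi]; simp
    have hne : x j ≠ y j := by simpa using this
    rw [flip_apply_self]
    cases hxy : x j <;> cases hy : y j <;> simp_all
  · have : j ∉ Finset.univ.filter (fun i => x i ≠ y i) := by rw [hi]; simpa using hj
    have : ¬ (x j ≠ y j) := by simpa using this
    rw [flip_apply_ne x hj]
    exact (not_ne_iff.mp this).symm

lemma flip_inj_idx (u : Fin n → Bool) {i j : Fin n} (h : flip u i = flip u j) : i = j := by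
  by_contra hij
  have := congrFun h i
  rw [flip_apply_self, flip_apply_ne u hij] at this
  simp at this


variable {n : ℕ}
/-- four-cycle lemma -/
lemma four_cycle {u z : Fin n → Bool} {a b : Fin n} (hab : a ≠ b)
    (h1 : (hypercube n).Adj z (flip u a)) (h2 : (hypercube n).Adj z (flip u b)) :
    z = u ∨ z = flip (flip u a) b := by
  obtain ⟨p, hp⟩ := eq_flip_of_adj ((hypercube n).adj_symm h1)
  obtain ⟨q, hq⟩ := eq_flip_of_adj ((hypercube n).adj_symm h2)
  by_cases hpa : p = a
  · subst hpa; left; rw [hp, flip_flip]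
  · right
    -- z = flip (flip u a) p with p ≠ a; z = flip (flip u b) q
    -- evaluate at a
    have ha1 : z a = !(u a) := by
      rw [hp, flip_apply_ne _ (fun h => hpa h.symm), flip_apply_self]
    have hqa : q = a := by
      by_contra hqa
      have : z a = u a := by
        rw [hq, flip_apply_ne _ (fun h => hqa h.symm), flip_apply_ne _ hab]
      rw [ha1] at this
      cases u a <;> simp_all
    subst hqa
    have hpb : p = b := by
      by_contra hpb
      have h1' : z b = !(u b) := by
        rw [hq, flip_apply_ne _ (Ne.symm hab), flip_apply_self]
      have h2' : z b = u b := by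
        rw [hp, flip_apply_ne _ (fun h => hpb h.symm), flip_apply_ne _ (Ne.symm hab)]
      rw [h1'] at h2'
      cases u b <;> simp_all
    subst hpb
    exact hp

variable (g : hypercube n ≃g hypercube n)

/-- the local coordinate permutation -/
noncomputable def locp (g : hypercube n ≃g hypercube n) (x : Fin n → Bool) (i : Fin n) : Fin n :=
  Classical.choose (eq_flip_of_adj (g.map_adj_iff.mpr (adj_flip x i)))

lemma locp_spec (x : Fin n → Bool) (i : Fin n) :
    g (flip x i) = flip (g x) (locp g x i) :=
  Classical.choose_spec (eq_flip_of_adj (g.map_adj_iff.mpr (adj_flip x i)))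

lemma locp_injective (x : Fin n → Bool) : Function.Injective (locp g x) := by
  intro i j h
  have h1 : g (flip x i) = g (flip x j) := by
    rw [locp_spec g x i, locp_spec g x j, h]
  exact flip_inj_idx x (g.injective h1)


variable {n : ℕ}
variable (g : hypercube n ≃g hypercube n)

lemma locp_flip (x : Fin n → Bool) (i : Fin n) : locp g (flip x i) = locp g x := by
  funext j
  by_cases hij : j = i
  · subst hij
    -- g (flip (flip x j) j) = g x
    have h1 : g (flip (flip x j) j) = flip (g (flip x j)) (locp g (flip x j) j) :=
      locp_spec g (flip x j) j
    rw [flip_flip] at h1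
    have h2 : g x = flip (g (flip x j)) (locp g x j) := by
      rw [locp_spec g x j]
      conv_lhs => rw [← flip_flip (g x) (locp g x j)]
    exact flip_inj_idx _ (h2.symm.trans h1).symm ▸ rfl
  · -- j ≠ i
    have hne : flip (flip x i) j ≠ x := by
      intro h
      have := congrFun h j
      rw [flip_apply_self, flip_apply_ne _ (fun hh => hij hh)] at this
      cases x j <;> simp_all
    have hab : locp g x i ≠ locp g x j := fun h => hij (locp_injective g x h).symm
    -- z := g (flip (flip x i) j) is adjacent to flip (g x) (locp g x i) = g (flip x i)
    have hadj1 : (hypercube n).Adj (g (flip (flip x i) j)) (flip (g x) (locp g x i)) := by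
      rw [← locp_spec g x i]
      exact g.map_adj_iff.mpr ((hypercube n).adj_symm (adj_flip (flip x i) j))
    have hcomm : flip (flip x i) j = flip (flip x j) i := by
      funext m
      by_cases hmi : m = i
      · subst hmi
        rw [flip_apply_ne _ (fun hh => hij hh.symm), flip_apply_self, flip_apply_self,
          flip_apply_ne _ (fun hh => hij hh.symm)]
      · by_cases hmj : m = j
        · subst hmj
          rw [flip_apply_self, flip_apply_ne _ hij, flip_apply_ne _ hmi, flip_apply_self]
        · rw [flip_apply_ne _ hmj, flip_apply_ne _ hmi, flip_apply_ne _ hmi, flip_apply_ne _ hmj]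
    have hadj2 : (hypercube n).Adj (g (flip (flip x i) j)) (flip (g x) (locp g x j)) := by
      rw [← locp_spec g x j, hcomm]
      exact g.map_adj_iff.mpr ((hypercube n).adj_symm (adj_flip (flip x j) i))
    have h4 := four_cycle hab hadj1 hadj2
    rcases h4 with h4 | h4
    · exact absurd (g.injective h4) hne
    · -- g (flip (flip x i) j) = flip (flip (g x) (locp g x i)) (locp g x j)
      -- also = flip (g (flip x i)) (locp g (flip x i) j)
      have h5 : flip (g (flip x i)) (locp g (flip x i) j) =
          flip (g (flip x i)) (locp g x j) := by
        rw [← locp_spec g (flip x i) j, h4, locp_spec g x i]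
      exact flip_inj_idx _ h5

def wt (x : Fin n → Bool) : ℕ := (Finset.univ.filter (fun i => x i = true)).card

lemma exists_flip_wt {x : Fin n → Bool} (hx : x ≠ (fun _ => false)) :
    ∃ i, x i = true ∧ wt (flip x i) < wt x ∧ x = flip (flip x i) i := by
  have : ∃ i, x i = true := by
    by_contra h
    push_neg at h
    exact hx (funext fun i => by simpa using h i)
  obtain ⟨i, hi⟩ := this
  refine ⟨i, hi, ?_, (flip_flip x i).symm⟩
  have hsub : Finset.univ.filter (fun j => flip x i j = true) =
      (Finset.univ.filter (fun j => x j = true)).erase i := by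
    ext j
    simp only [Finset.mem_filter, Finset.mem_univ, true_and, Finset.mem_erase]
    by_cases hj : j = i
    · subst hj; rw [flip_apply_self, hi]; simp
    · rw [flip_apply_ne _ hj]; simp [hj]
  unfold wt
  rw [hsub]
  exact Finset.card_erase_lt_of_mem (by simp [hi])

lemma locp_const (x : Fin n → Bool) : locp g x = locp g (fun _ => false) := by
  generalize hw : wt x = w
  induction w using Nat.strong_induction_on generalizing x with
  | _ w ih =>
    by_cases hx : x = (fun _ => false)
    · rw [hx]
    · obtain ⟨i, _, hlt, hxf⟩ := exists_flip_wt hx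
      rw [hxf, locp_flip]
      exact ih _ (hw ▸ hlt) _ rfl

noncomputable def sigma0 (g : hypercube n ≃g hypercube n) : Equiv.Perm (Fin n) :=
  Equiv.ofBijective (locp g (fun _ => false))
    ((Finite.injective_iff_bijective).mp (locp_injective g _))

lemma sigma0_apply (i : Fin n) : sigma0 g i = locp g (fun _ => false) i := rfl

/-- THE classification -/
lemma iso_form : ∀ x : Fin n → Bool, ∀ j : Fin n,
    g x j = xor (g (fun _ => false) j) (x ((sigma0 g).symm j)) := by
  intro x
  generalize hw : wt x = w
  induction w using Nat.strong_induction_on generalizing x with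
  | _ w ih =>
    by_cases hx : x = (fun _ => false)
    · intro j; subst hx; simp
    · obtain ⟨i, hi, hlt, hxf⟩ := exists_flip_wt hx
      intro j
      set x' := flip x i with hx'
      have hgs : g x = flip (g x') (locp g x' i) := by
        rw [hxf]; exact locp_spec g x' i
      have hlc : locp g x' i = sigma0 g i := by
        rw [locp_const g x', sigma0_apply]
      rw [hgs, hlc]
      by_cases hj : j = sigma0 g i
      · subst hj
        rw [flip_apply_self, ih _ (hw ▸ hlt) x' rfl, Equiv.symm_apply_apply]
        have hxi' : x' i = false := by
          rw [hx', flip_apply_self, hi]; rfl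
        rw [hxi', hi]
        cases g (fun _ => false) (sigma0 g i) <;> rfl
      · rw [flip_apply_ne _ hj, ih _ (hw ▸ hlt) x' rfl]
        have : x' ((sigma0 g).symm j) = x ((sigma0 g).symm j) := by
          rw [hx']
          refine flip_apply_ne _ (fun h => hj ?_)
          rw [← h, Equiv.apply_symm_apply]
        rw [this]


variable {n : ℕ}

lemma filter_perm_card (τ : Equiv.Perm (Fin n)) (p : Fin n → Prop) [DecidablePred p] :
    (Finset.univ.filter (fun j => p (τ j))).card = (Finset.univ.filter p).card := by
  apply Finset.card_bij (fun j _ => τ j)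
  · intro j hj; simpa using (Finset.mem_filter.mp hj).2
  · intro a _ b _ h; exact τ.injective h
  · intro b hb
    exact ⟨τ.symm b, by simpa using (Finset.mem_filter.mp hb).2, by simp⟩

/-- the standard automorphism `x ↦ fun j => c j ^^ x (τ j)` -/
def stdIso (c : Fin n → Bool) (τ : Equiv.Perm (Fin n)) : hypercube n ≃g hypercube n where
  toFun x := fun j => xor (c j) (x (τ j))
  invFun y := fun i => xor (c (τ.symm i)) (y (τ.symm i))
  left_inv x := by funext i; simp
  right_inv y := by funext j; simp
  map_rel_iff' := by
    intro x y
    show (Finset.univ.filter (fun j => xor (c j) (x (τ j)) ≠ xor (c j) (y (τ j)))).card = 1 ↔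
      (Finset.univ.filter (fun i => x i ≠ y i)).card = 1
    have hset : (Finset.univ.filter (fun j => xor (c j) (x (τ j)) ≠ xor (c j) (y (τ j)))) =
        (Finset.univ.filter (fun j => x (τ j) ≠ y (τ j))) := by
      apply Finset.filter_congr
      intro j _
      constructor
      · intro h he; exact h (by rw [he])
      · intro h he
        exact h (by cases c j <;> simpa using he)
    rw [hset, filter_perm_card τ (fun i => x i ≠ y i)]

lemma stdIso_apply (c : Fin n → Bool) (τ : Equiv.Perm (Fin n)) (x : Fin n → Bool) (j : Fin n) :
    stdIso c τ x j = xor (c j) (x (τ j)) := rfl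


variable {n : ℕ}

/-- `Z k τ i` : coordinate `i` is "known false" -/
def Zd (k : ℕ) (τ : Equiv.Perm (Fin n)) (i : Fin n) : Prop :=
  i.val < k ∨ ∃ j₀ : Fin n, j₀.val < k ∧ i = τ j₀

lemma perm_surgery (k : ℕ) (τ : Equiv.Perm (Fin n)) :
    ∃ τ' : Equiv.Perm (Fin n),
      (∀ j : Fin n, j.val < k → τ' j = j) ∧
      (∀ j : Fin n, τ' j = τ j ∨ (Zd k τ (τ' j) ∧ Zd k τ (τ j))) := by
  classical
  set B : Finset (Fin n) := Finset.univ.filter (fun j => ¬ j.val < k ∧ (τ j).val < k) with hB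
  set C : Finset (Fin n) := Finset.univ.filter (fun i => ¬ i.val < k ∧ (τ.symm i).val < k) with hC
  set B0 : Finset (Fin n) := Finset.univ.filter (fun j => j.val < k ∧ ¬ (τ j).val < k) with hB0
  have hCimg : C = B0.image τ := by
    ext i
    simp only [hC, hB0, Finset.mem_filter, Finset.mem_univ, true_and, Finset.mem_image]
    constructor
    · rintro ⟨h1, h2⟩
      exact ⟨τ.symm i, ⟨h2, by simpa using h1⟩, by simp⟩
    · rintro ⟨j, ⟨hj1, hj2⟩, rfl⟩
      exact ⟨hj2, by simpa using hj1⟩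
  have hcard : B.card = C.card := by
    have e1 : (Finset.univ.filter (fun j => ((τ j).val < k ∧ j.val < k))).card + B.card =
        (Finset.univ.filter (fun j => (τ j).val < k)).card := by
      rw [hB]
      rw [← Finset.filter_filter, ← Finset.filter_filter]
      have := Finset.card_filter_add_card_filter_not
        (s := Finset.univ.filter (fun j : Fin n => (τ j).val < k)) (p := fun j => j.val < k)
      simpa [Finset.filter_filter, and_comm] using this
    have e2 : (Finset.univ.filter (fun j => (j.val < k ∧ (τ j).val < k))).card + B0.card =
        (Finset.univ.filter (fun j : Fin n => j.val < k)).card := by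
      rw [hB0]
      have := Finset.card_filter_add_card_filter_not
        (s := Finset.univ.filter (fun j : Fin n => j.val < k)) (p := fun j => (τ j).val < k)
      simpa [Finset.filter_filter, and_comm] using this
    have e3 : (Finset.univ.filter (fun j => (τ j).val < k)).card =
        (Finset.univ.filter (fun j : Fin n => j.val < k)).card :=
      filter_perm_card τ (fun j => j.val < k)
    have e4 : C.card = B0.card := by
      rw [hCimg, Finset.card_image_of_injective _ τ.injective]
    have e5 : (Finset.univ.filter (fun j => ((τ j).val < k ∧ j.val < k))).card =
        (Finset.univ.filter (fun j => (j.val < k ∧ (τ j).val < k))).card := by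
      congr 1
      apply Finset.filter_congr
      intro j _
      exact and_comm
    omega
  have hBC : Fintype.card {x // x ∈ B} = Fintype.card {x // x ∈ C} := by
    rw [Fintype.card_coe, Fintype.card_coe, hcard]
  let e : {x // x ∈ B} ≃ {x // x ∈ C} := Fintype.equivOfCardEq hBC
  set f : Fin n → Fin n := fun j =>
    if h : j ∈ B then (e ⟨j, h⟩ : Fin n) else if j.val < k then j else τ j with hf
  have hfB : ∀ j (h : j ∈ B), f j = (e ⟨j, h⟩ : Fin n) := by
    intro j h; rw [hf]; simp [h]
  have hfk : ∀ j : Fin n, j.val < k → f j = j := by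
    intro j h
    have hnB : j ∉ B := by rw [hB]; simp [h]
    rw [hf]; simp [hnB, h]
  have hfo : ∀ j : Fin n, ¬ j.val < k → ¬ (τ j).val < k → f j = τ j := by
    intro j h1 h2
    have hnB : j ∉ B := by rw [hB]; simp [h1, h2]
    rw [hf]; simp [hnB, h1]
  have hCmem : ∀ i : Fin n, i ∈ C → ¬ i.val < k ∧ (τ.symm i).val < k := by
    intro i hi; rw [hC] at hi; simpa using hi
  have hBmem : ∀ j : Fin n, j ∈ B → ¬ j.val < k ∧ (τ j).val < k := by
    intro j hj; rw [hB] at hj; simpa using hj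
  have hcases : ∀ j : Fin n,
      (∃ h : j ∈ B, f j = (e ⟨j, h⟩ : Fin n) ∧ ¬ (f j).val < k ∧ (τ.symm (f j)).val < k)
      ∨ (j.val < k ∧ f j = j)
      ∨ (¬ j.val < k ∧ ¬ (τ j).val < k ∧ f j = τ j ∧ ¬ (f j).val < k ∧
          ¬ (τ.symm (f j)).val < k) := by
    intro j
    by_cases h : j ∈ B
    · left
      refine ⟨h, hfB j h, ?_⟩
      have : f j ∈ C := by rw [hfB j h]; exact (e ⟨j, h⟩).2
      exact hCmem _ this
    · by_cases hjk : j.val < k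
      · exact Or.inr (Or.inl ⟨hjk, hfk j hjk⟩)
      · have hτ : ¬ (τ j).val < k := by
          intro hc; exact h (by rw [hB]; simp [hc]; omega)
        have hfj := hfo j hjk hτ
        refine Or.inr (Or.inr ⟨hjk, hτ, hfj, by rw [hfj]; exact hτ, ?_⟩)
        rw [hfj, Equiv.symm_apply_apply]; exact hjk
  have hinj : Function.Injective f := by
    intro j1 j2 hEq
    rcases hcases j1 with ⟨h1, he1, hk1, hs1⟩ | ⟨hk1, he1⟩ | ⟨hk1, hτ1, he1, hk1', hs1⟩ <;>
      rcases hcases j2 with ⟨h2, he2, hk2, hs2⟩ | ⟨hk2, he2⟩ | ⟨hk2, hτ2, he2, hk2', hs2⟩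
    · have : e ⟨j1, h1⟩ = e ⟨j2, h2⟩ := Subtype.ext (by rw [← he1, ← he2, hEq])
      simpa using e.injective this
    · rw [hEq, he2] at hk1; exact absurd hk2 hk1
    · rw [hEq] at hs1; exact absurd hs1 hs2
    · rw [← hEq, he1] at hk2; exact absurd hk1 hk2
    · rw [← he1, ← he2, hEq]
    · rw [← hEq, he1] at hk2'; exact absurd hk1 hk2'
    · rw [← hEq] at hs2; exact absurd hs2 hs1
    · rw [hEq, he2] at hk1'; exact absurd hk2 hk1'
    · rw [he1, he2] at hEq; exact τ.injective hEq
  refine ⟨Equiv.ofBijective f (Finite.injective_iff_bijective.mp hinj), ?_, ?_⟩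
  · intro j hj
    exact hfk j hj
  · intro j
    have happ : (Equiv.ofBijective f (Finite.injective_iff_bijective.mp hinj)) j = f j := rfl
    rw [happ]
    rcases hcases j with ⟨h, he, hk', hs⟩ | ⟨hk', he⟩ | ⟨hk', hτ', he, _, _⟩
    · right
      constructor
      · exact Or.inr ⟨τ.symm (f j), hs, by simp⟩
      · exact Or.inl (hBmem j h).2
    · right
      constructor
      · rw [he]; exact Or.inl hk'
      · exact Or.inr ⟨j, hk', rfl⟩
    · exact Or.inl he

end HCaux

theorem stmt_15 (n k a : ℕ) (hk : k ≤ n) (ha : a ≤ 2 ^ (n - k))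
    (g : hypercube n ≃g hypercube n)
    (h0 : ∀ j : Fin n, j.val < k → mCount ((initSeg n a).image g) j = 0) :
    (∀ x ∈ (initSeg n a).image g, ∀ j : Fin n, j.val < k → x j = false) ∧
    ∃ g' : hypercube n ≃g hypercube n,
      (initSeg n a).image g' = (initSeg n a).image g ∧
      ∀ x : Fin n → Bool, ∀ j : Fin n, j.val < k → g' x j = x j := by
  classical
  -- Part 1
  have part1 : ∀ x ∈ (initSeg n a).image g, ∀ j : Fin n, j.val < k → x j = false := by
    intro x hx j hj
    have hcard := h0 j hj
    rw [mCount, Finset.card_eq_zero] at hcard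
    by_contra hxj
    have hxt : x j = true := by cases hxe : x j <;> simp_all
    have : x ∈ ((initSeg n a).image g).filter (fun x => x j = true) :=
      Finset.mem_filter.mpr ⟨hx, hxt⟩
    rw [hcard] at this
    exact absurd this (Finset.notMem_empty x)
  refine ⟨part1, ?_⟩
  rcases Nat.eq_zero_or_pos a with rfl | hapos
  · -- a = 0 : the initial segment is empty, take the identity
    have hempty : initSeg n 0 = ∅ := by
      rw [initSeg, Finset.filter_eq_empty_iff]
      intro x _
      omega
    refine ⟨(SimpleGraph.Iso.refl : hypercube n ≃g hypercube n), by rw [hempty]; simp, fun x j _ => ?_⟩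
    rfl
  · -- a ≥ 1
    set c : Fin n → Bool := g (fun _ => false) with hc
    set τ : Equiv.Perm (Fin n) := (HCaux.sigma0 g).symm with hτ
    have hform : ∀ x : Fin n → Bool, ∀ j : Fin n, g x j = xor (c j) (x (τ j)) := by
      intro x j
      rw [hc, hτ]
      exact HCaux.iso_form g x j
    have hzero : (fun _ => false : Fin n → Bool) ∈ initSeg n a := by
      rw [initSeg, Finset.mem_filter]
      refine ⟨Finset.mem_univ _, ?_⟩
      have : bval (fun _ => false : Fin n → Bool) = 0 := by simp [bval]
      omega
    have hcf : ∀ j : Fin n, j.val < k → c j = false := by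
      intro j hj
      exact part1 _ (Finset.mem_image_of_mem _ hzero) j hj
    -- every element of the initial segment vanishes on the first k coordinates
    have hF0 : ∀ x ∈ initSeg n a, ∀ i : Fin n, i.val < k → x i = false := by
      intro x hx i hi
      rw [initSeg, Finset.mem_filter] at hx
      by_contra hxi
      have hxt : x i = true := by revert hxi; cases x i <;> simp
      have hle : 2 ^ (n - 1 - i.val) ≤ bval x := by
        have := Finset.single_le_sum
          (f := fun i : Fin n => if x i then 2 ^ (n - 1 - i.val) else 0)
          (fun _ _ => Nat.zero_le _) (Finset.mem_univ i)
        simp only [hxt, if_true] at this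
        simpa [bval] using this
      have hpow : 2 ^ (n - k) ≤ 2 ^ (n - 1 - i.val) := by
        apply Nat.pow_le_pow_right (by norm_num)
        omega
      have := hx.2
      omega
    have hKfact : ∀ x ∈ initSeg n a, ∀ j : Fin n, j.val < k → x (τ j) = false := by
      intro x hx j hj
      have h1 : g x j = false := part1 _ (Finset.mem_image_of_mem _ hx) j hj
      rw [hform x j, hcf j hj] at h1
      simpa using h1
    have hZfalse : ∀ x ∈ initSeg n a, ∀ i : Fin n, HCaux.Zd k τ i → x i = false := by
      intro x hx i hi
      rcases hi with hi | ⟨j₀, hj₀, rfl⟩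
      · exact hF0 x hx i hi
      · exact hKfact x hx j₀ hj₀
    obtain ⟨τ', hτ'fix, hτ'prop⟩ := HCaux.perm_surgery k τ
    refine ⟨HCaux.stdIso c τ', ?_, ?_⟩
    · apply Finset.image_congr
      intro x hx
      funext j
      rw [HCaux.stdIso_apply, hform x j]
      rcases hτ'prop j with h | ⟨hz1, hz2⟩
      · rw [h]
      · rw [hZfalse x hx _ hz1, hZfalse x hx _ hz2]
    · intro x j hj
      rw [HCaux.stdIso_apply, hτ'fix j hj, hcf j hj]
      simp
end
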